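/- For the cycle h = (x ↦ ρ₁ ⊗ y⁴) ∈ Mor(B, C), the induced map satisfies (I_{A_p} ⊠ h)(α ⊗ x) = Σ_{i=0}^{p−2} β_{2p−i−2} ⊗ y⁴. -/

import Mathlib

/-!
We work over the field `F₂ = ZMod 2`.

The torus algebra `𝒜` is encoded as the 8-dimensional `F₂`-vector space
`Fin 8 → F₂` with basis indices
`0 = ι₀`, `1 = ι₁`, `2 = ρ₁`, `3 = ρ₂`, `4 = ρ₃`, `5 = ρ₁₂`, `6 = ρ₂₃`, `7 = ρ₁₂₃`,
and with the multiplication determined by the multiplication table `mulTable`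
(rows/columns indexed by basis elements), which records that `ι₀, ι₁` are
orthogonal idempotents with `ι₀ + ι₁ = 1`, that
`ρ₁ = ι₀ρ₁ι₁`, `ρ₂ = ι₁ρ₂ι₀`, `ρ₃ = ι₀ρ₃ι₁`, `ρ₁₂ = ι₀ρ₁₂ι₀`, `ρ₂₃ = ι₁ρ₂₃ι₁`,
`ρ₁₂₃ = ι₀ρ₁₂₃ι₁`, and that the only nonzero products of `ρ`-elements are
`ρ₁ρ₂ = ρ₁₂`, `ρ₂ρ₃ = ρ₂₃`, `ρ₁ρ₂₃ = ρ₁₂₃`, `ρ₁₂ρ₃ = ρ₁₂₃`.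
-/

/-- The ground field `F₂`. -/
abbrev F2 : Type := ZMod 2

/-- The torus algebra as an `F₂`-vector space. -/
abbrev Alg : Type := Fin 8 → F2

/-- The `i`-th basis vector of the torus algebra. -/
def bv (i : Fin 8) : Alg := Pi.single i 1

/-- The multiplication table of the torus algebra on basis elements:
entry `(i, j)` is the product of the `i`-th and `j`-th basis elements. -/
def mulTable : Fin 8 → Fin 8 → Alg :=
  ![![bv 0, 0, bv 2, 0, bv 4, bv 5, 0, bv 7],
    ![0, bv 1, 0, bv 3, 0, 0, bv 6, 0],
    ![0, bv 2, 0, bv 5, 0, 0, bv 7, 0],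
    ![bv 3, 0, 0, 0, bv 6, 0, 0, 0],
    ![0, bv 4, 0, 0, 0, 0, 0, 0],
    ![bv 5, 0, 0, 0, bv 7, 0, 0, 0],
    ![0, bv 6, 0, 0, 0, 0, 0, 0],
    ![0, bv 7, 0, 0, 0, 0, 0, 0]]

/-- The multiplication `μ : 𝒜 ⊗ 𝒜 → 𝒜` of the torus algebra, as a bilinear
operation extended from the multiplication table. -/
def algMul (x y : Alg) : Alg := fun k => ∑ i, ∑ j, x i * y j * mulTable i j k
/-- The type-D structure `B`: a single generator `x` (the unique element of `Unit`)
lying in the idempotent `ι₀`, with `δ¹(x) = ρ₁₂ ⊗ x`.  `deltaB s t` is the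
`𝒜`-coefficient of `t` in `δ¹(s)`. -/
def deltaB : Unit → Unit → Alg := fun _ _ => bv 5

/-- The idempotent of the generator of `B`. -/
def idemB : Unit → Fin 2 := fun _ => 0
/-- The type-D structure `C`, with basis indexed by `Fin 8`:
`0 = a`, `1 = b`, `2 = c`, `3 = e`, `4 = y¹`, `5 = y²`, `6 = y³`, `7 = y⁴`.
`deltaC s t` is the `𝒜`-coefficient of `t` in `δ¹(s)`; the differentials are
`δ¹(a) = ρ₃ ⊗ y¹ + ρ₁ ⊗ y⁴`, `δ¹(y¹) = ρ₂ ⊗ b`, `δ¹(b) = ρ₁ ⊗ y²`,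
`δ¹(c) = ρ₃ ⊗ y³ + ρ₁₂₃ ⊗ y⁴`, `δ¹(y³) = ρ₂ ⊗ e`, `δ¹(e) = ρ₁₂₃ ⊗ y²`,
`δ¹(y²) = δ¹(y⁴) = 0`. -/
def deltaC : Fin 8 → Fin 8 → Alg :=
  ![![0, 0, 0, 0, bv 4, 0, 0, bv 2],
    ![0, 0, 0, 0, 0, bv 2, 0, 0],
    ![0, 0, 0, 0, 0, 0, bv 4, bv 7],
    ![0, 0, 0, 0, 0, bv 7, 0, 0],
    ![0, bv 3, 0, 0, 0, 0, 0, 0],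
    ![0, 0, 0, 0, 0, 0, 0, 0],
    ![0, 0, 0, bv 3, 0, 0, 0, 0],
    ![0, 0, 0, 0, 0, 0, 0, 0]]

/-- The idempotents of the generators of `C`: `a, b, c, e ∈ ι₀C` and
`y¹, y², y³, y⁴ ∈ ι₁C`. -/
def idemC : Fin 8 → Fin 2 := fun g => if (g : ℕ) < 4 then 0 else 1
/-- The last vertex of a path: `lastNode s [t₁, …, t_j] = t_j` (or `s` if the
path is empty). -/
def lastNode {S : Type} : S → List S → S
  | s, [] => s
  | _, t :: ts => lastNode t ts

/-- The list of `𝒜`-coefficients read along a path: for `δʲ`, the term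
`a₁ ⊗ ⋯ ⊗ a_j ⊗ t_j` appearing in `δʲ(s)` corresponding to the path
`s → t₁ → ⋯ → t_j` has `chain δ s [t₁, …, t_j] = [δ(s,t₁), δ(t₁,t₂), …]`. -/
def chain {S : Type} (δ : S → S → Alg) : S → List S → List Alg
  | _, [] => []
  | s, t :: ts => δ s t :: chain δ t ts

/-- Helper: multilinear coefficient of the pattern `ρ₂₃, …, ρ₂₃, ρ₂`:
the product of the `ρ₂₃`-coefficients of all but the last entry with the
`ρ₂`-coefficient of the last entry. -/
def tail23 : List Alg → F2
  | [] => 0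
  | [a] => a 3
  | a :: as => a 6 * tail23 as
/-- The product of the `k`-th coefficients of the entries of a list. -/
def prodAt (k : Fin 8) (l : List Alg) : F2 := (l.map fun a => a k).prod

/-- The `k`-th coefficient of the last entry of a list (`0` for the empty list). -/
def lastC (k : Fin 8) (l : List Alg) : F2 := (l.getLast?.map fun a => a k).getD 0

/-- The `k`-th coefficient of the `j`-th entry of a list (`0` if out of range). -/
def getC (k : Fin 8) (l : List Alg) (j : ℕ) : F2 := (l[j]?.map fun a => a k).getD 0

open Polynomial in
/-- The `A∞`-operations of the module `A_p = CFA⁻(𝓗_p)` associated to the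
`(p,1)`-cable pattern, with generators `α` (encoded as `none`) and
`β₁, …, β_{2p−2}` (encoded as `some i` with `βₖ ↦ some (k-1)`), extended
multilinearly: `mcoefAp p as g` is the `F₂[U]`-coefficient
(`U = Polynomial.X`) of the generator `g` in `m_{1 + as.length}(α, as)`.
The only nonzero operations with first input `α` are strict unitality
`m₂(α, ι₀) = α` together with:
* `m_{3+j}(α, ρ₃, ρ₂₃, …, ρ₂₃, ρ₂) = U^{p(j+1)} ⬝ α` (with `j ≥ 0` copies of `ρ₂₃`);
* `m_{2+i}(α, ρ₁₂, …, ρ₁₂, ρ₁) = β_{2p−i−2}` (with `0 ≤ i ≤ p−2` copies of `ρ₁₂`);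
* `m_{4+i+j}(α, ρ₃, ρ₂₃, …, ρ₂₃, ρ₂, ρ₁₂, …, ρ₁₂, ρ₁) = U^{pj+i+1} ⬝ β_{i+1}`
  (with `j ≥ 0` copies of `ρ₂₃` and `0 ≤ i ≤ p−2` copies of `ρ₁₂`). -/
noncomputable def mcoefAp (p : ℕ) (as : List Alg) : Option (Fin (2 * p - 2)) → Polynomial F2
  | none =>
      match as with
      | [] => 0
      | [a] => C (a 0)
      | a :: rest => C (a 4 * tail23 rest) * X ^ (p * rest.length)
  | some i =>
      (if as.length ≤ p - 1 ∧ (i : ℕ) = 2 * p - as.length - 2 then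
        C (prodAt 5 as.dropLast * lastC 2 as) else 0) +
      (match as with
       | [] => 0
       | a :: rest =>
          if (i : ℕ) ≤ p - 2 ∧ (i : ℕ) + 3 ≤ as.length then
            C (a 4 * prodAt 6 (rest.take (as.length - 3 - (i : ℕ))) *
                getC 3 rest (as.length - 3 - (i : ℕ)) *
                prodAt 5 ((rest.drop (as.length - 3 - (i : ℕ) + 1)).dropLast) *
                lastC 2 rest) *
              X ^ (p * (as.length - 3 - (i : ℕ)) + (i : ℕ) + 1)
          else 0)

/-- The box tensor product `(I_{A_p} ⊠ f)(α ⊗ n)` of the identity of the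
`A∞`-module `A_p` with a morphism `f ∈ Mor(N, N′)` of type-D structures, as an
element of `A_p ⊗ N′` (a function assigning to each pair `(g, u)` — a generator
`g` of `A_p` and a basis element `u` of `N′` — the `F₂[U]`-coefficient of
`g ⊗ u`):
`(I_{A_p} ⊠ f)(α ⊗ n) = Σ_{j,l ≥ 0} m_{j+l+2}(α, a₁, …, a_j, b, c₁, …, c_l) ⊗ n″`,
summed over all terms `a₁ ⊗ ⋯ ⊗ a_j ⊗ n′` appearing in `δʲ(n)` (paths `P.1`
in `N`), `b ⊗ m′` appearing in `f(n′)` (the intermediate basis element `t`),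
and `c₁ ⊗ ⋯ ⊗ c_l ⊗ n″` appearing in `δˡ(m′)` (paths `P.2` in `N′`). -/
noncomputable def boxAp (p : ℕ) {S T : Type} [Fintype T] [DecidableEq T]
    (δN : S → S → Alg) (δM : T → T → Alg) (f : S → T → Alg) (n : S) :
    Option (Fin (2 * p - 2)) × T → Polynomial F2 :=
  fun gu => ∑ᶠ P : List S × List T, ∑ t : T,
    if lastNode t P.2 = gu.2 then
      mcoefAp p (chain δN n P.1 ++ f (lastNode n P.1) t :: chain δM t P.2) gu.1
    else 0
/-- The morphism `h = (x ↦ ρ₁ ⊗ y⁴) ∈ Mor(B, C)`. -/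
def hMat : Unit → Fin 8 → Alg := fun _ => ![0, 0, 0, 0, 0, 0, 0, bv 2]


open Polynomial in
lemma mcoefAp_none_one (p : ℕ) (a : Alg) : mcoefAp p [a] none = C (a 0) := rfl

open Polynomial in
lemma mcoefAp_none_cons (p : ℕ) (a b : Alg) (bs : List Alg) :
    mcoefAp p (a :: b :: bs) none = C (a 4 * tail23 (b :: bs)) * X ^ (p * (b :: bs).length) := rfl

open Polynomial in
lemma mcoefAp_some (p : ℕ) (a : Alg) (rest : List Alg) (i : Fin (2 * p - 2)) :
    mcoefAp p (a :: rest) (some i) =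
      (if (a :: rest).length ≤ p - 1 ∧ (i : ℕ) = 2 * p - (a :: rest).length - 2 then
        C (prodAt 5 (a :: rest).dropLast * lastC 2 (a :: rest)) else 0) +
      (if (i : ℕ) ≤ p - 2 ∧ (i : ℕ) + 3 ≤ (a :: rest).length then
        C (a 4 * prodAt 6 (rest.take ((a :: rest).length - 3 - (i : ℕ))) *
            getC 3 rest ((a :: rest).length - 3 - (i : ℕ)) *
            prodAt 5 ((rest.drop ((a :: rest).length - 3 - (i : ℕ) + 1)).dropLast) *
            lastC 2 rest) *
          X ^ (p * ((a :: rest).length - 3 - (i : ℕ)) + (i : ℕ) + 1)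
       else 0) := rfl

lemma hMat0 : ∀ t : Fin 8, t ≠ 7 → hMat () t = 0 := by decide
lemma hdC7 : ∀ v : Fin 8, deltaC 7 v = 0 := by decide
lemma hMat7 : hMat () 7 = bv 2 := by decide
lemma bv54 : bv 5 4 = 0 := by decide
lemma bv24 : bv 2 4 = 0 := by decide
lemma bv55 : bv 5 5 = 1 := by decide
lemma bv22 : bv 2 2 = 1 := by decide

lemma tail23_zero : ∀ {l : List Alg}, (0 : Alg) ∈ l → tail23 l = 0 := by
  intro l
  induction l with
  | nil => intro h; cases h
  | cons a as ih =>
    intro h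
    cases as with
    | nil =>
      have ha : (0 : Alg) = a := List.mem_singleton.mp h
      rw [← ha]; rfl
    | cons b bs =>
      rw [show tail23 (a :: b :: bs) = a 6 * tail23 (b :: bs) from rfl]
      rcases List.mem_cons.mp h with h1 | h1
      · rw [← h1]; simp
      · rw [ih h1, mul_zero]

lemma prodAt_zero {l : List Alg} (h : (0 : Alg) ∈ l) (k : Fin 8) : prodAt k l = 0 := by
  unfold prodAt
  exact List.prod_eq_zero (List.mem_map.mpr ⟨0, h, rfl⟩)

lemma part1_zero {as : List Alg} (h : (0 : Alg) ∈ as) :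
    prodAt 5 as.dropLast * lastC 2 as = 0 := by
  rcases List.eq_nil_or_concat as with rfl | ⟨l, b, rfl⟩
  · cases h
  · rw [List.concat_eq_append] at *
    rw [List.dropLast_concat]
    rcases List.mem_append.mp h with h1 | h1
    · rw [prodAt_zero h1, zero_mul]
    · have hb : (0 : Alg) = b := List.mem_singleton.mp h1
      subst hb
      have hl : lastC 2 (l ++ [(0 : Alg)]) = 0 := by
        unfold lastC
        rw [List.getLast?_concat]
        rfl
      rw [hl, mul_zero]

lemma getC_zero {rest : List Alg} {m : ℕ} (hm : m < rest.length) (h0 : rest[m] = 0) :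
    getC 3 rest m = 0 := by
  unfold getC
  rw [List.getElem?_eq_getElem hm, h0]
  rfl

lemma lastC_zero {rest : List Alg} {k : ℕ} (hk : k < rest.length)
    (hlast : k = rest.length - 1) (h0 : rest[k] = 0) : lastC 2 rest = 0 := by
  unfold lastC
  rw [List.getLast?_eq_getElem?]
  rw [← hlast, List.getElem?_eq_getElem hk, h0]
  rfl

lemma part2_zero {a : Alg} {rest : List Alg} (h : (0 : Alg) ∈ a :: rest) (m : ℕ) :
    a 4 * prodAt 6 (rest.take m) * getC 3 rest m *
      prodAt 5 ((rest.drop (m + 1)).dropLast) * lastC 2 rest = 0 := by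
  rcases List.mem_cons.mp h with h1 | h1
  · rw [← h1]; simp
  · obtain ⟨k, hk, hke⟩ := List.mem_iff_getElem.mp h1
    -- hke : rest[k] = 0 ? check direction
    rcases lt_trichotomy k m with hlt | rfl | hgt
    · have hmem : (0 : Alg) ∈ rest.take m := by
        have hlen : k < (rest.take m).length := by
          simp only [List.length_take]
          omega
        have heq : (rest.take m)[k]'hlen = rest[k] := List.getElem_take ..
        rw [← hke, ← heq]
        exact List.getElem_mem _
      rw [prodAt_zero hmem]
      ring
    · rw [getC_zero hk hke]
      ring
    · by_cases hl : k = rest.length - 1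
      · rw [lastC_zero hk hl hke]
        ring
      · have hmem : (0 : Alg) ∈ (rest.drop (m + 1)).dropLast := by
          have h1' : k - (m + 1) < ((rest.drop (m + 1)).dropLast).length := by
            simp [List.length_dropLast, List.length_drop]
            omega
          have h2' : ((rest.drop (m + 1)).dropLast)[k - (m + 1)]'h1' = rest[k] := by
            rw [List.getElem_dropLast, List.getElem_drop]
            congr 1
            omega
          rw [← hke, ← h2']
          exact List.getElem_mem _
        rw [prodAt_zero hmem]
        ring

open Polynomial in
lemma mcoefAp_zero (p : ℕ) {as : List Alg} (h : (0 : Alg) ∈ as)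
    (g : Option (Fin (2 * p - 2))) : mcoefAp p as g = 0 := by
  cases g with
  | none =>
    cases as with
    | nil => cases h
    | cons a rest =>
      cases rest with
      | nil =>
        have ha : (0 : Alg) = a := List.mem_singleton.mp h
        rw [mcoefAp_none_one, ← ha]
        simp
      | cons b bs =>
        rw [mcoefAp_none_cons]
        rcases List.mem_cons.mp h with h1 | h1
        · rw [← h1]; simp
        · rw [tail23_zero h1]; simp
  | some i =>
    cases as with
    | nil => cases h
    | cons a rest =>
      rw [mcoefAp_some, part1_zero h, map_zero, ite_self, zero_add]
      split
      · rw [part2_zero h, map_zero, zero_mul]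
      · rfl

lemma chainB (l : List Unit) : chain deltaB () l = List.replicate l.length (bv 5) := by
  induction l with
  | nil => rfl
  | cons t ts ih =>
    rw [show chain deltaB () (t :: ts) = bv 5 :: chain deltaB () ts from rfl, ih]
    rfl

open Polynomial in
lemma key_none (p n : ℕ) : mcoefAp p (List.replicate n (bv 5) ++ [bv 2]) none = 0 := by
  cases n with
  | zero =>
    rw [show List.replicate 0 (bv 5) ++ [bv 2] = [bv 2] from rfl, mcoefAp_none_one]
    rw [show bv 2 0 = (0 : F2) by decide, map_zero]
  | succ m =>
    rw [List.replicate_succ, List.cons_append]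
    obtain ⟨b, bs, hb⟩ := List.exists_cons_of_ne_nil
      (l := List.replicate m (bv 5) ++ [bv 2]) (by simp)
    rw [hb, mcoefAp_none_cons, bv54, zero_mul, map_zero, zero_mul]

open Polynomial in
lemma mcoefAp_some_head4 (p : ℕ) (a : Alg) (rest : List Alg) (ha : a 4 = 0)
    (i : Fin (2 * p - 2)) :
    mcoefAp p (a :: rest) (some i) =
      if (a :: rest).length ≤ p - 1 ∧ (i : ℕ) = 2 * p - (a :: rest).length - 2 then
        C (prodAt 5 (a :: rest).dropLast * lastC 2 (a :: rest)) else 0 := by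
  rw [mcoefAp_some, ha, zero_mul, zero_mul, zero_mul, zero_mul, map_zero, zero_mul,
    ite_self, add_zero]

open Polynomial in
lemma key_some (p n : ℕ) (i : Fin (2 * p - 2)) :
    mcoefAp p (List.replicate n (bv 5) ++ [bv 2]) (some i) =
      if n + 1 ≤ p - 1 ∧ (i : ℕ) = 2 * p - n - 3 then 1 else 0 := by
  have hstep : mcoefAp p (List.replicate n (bv 5) ++ [bv 2]) (some i) =
      if (List.replicate n (bv 5) ++ [bv 2]).length ≤ p - 1 ∧
          (i : ℕ) = 2 * p - (List.replicate n (bv 5) ++ [bv 2]).length - 2 then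
        C (prodAt 5 (List.replicate n (bv 5) ++ [bv 2]).dropLast *
            lastC 2 (List.replicate n (bv 5) ++ [bv 2])) else 0 := by
    cases n with
    | zero => exact mcoefAp_some_head4 p (bv 2) [] bv24 i
    | succ m =>
      rw [List.replicate_succ, List.cons_append]
      exact mcoefAp_some_head4 p (bv 5) _ bv54 i
  rw [hstep]
  have h1 : (List.replicate n (bv 5) ++ [bv 2]).length = n + 1 := by simp
  have h2 : prodAt 5 (List.replicate n (bv 5) ++ [bv 2]).dropLast = 1 := by
    rw [List.dropLast_concat]
    unfold prodAt
    rw [List.map_replicate, List.prod_replicate, bv55, one_pow]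
  have h3 : lastC 2 (List.replicate n (bv 5) ++ [bv 2]) = 1 := by
    unfold lastC
    rw [List.getLast?_concat]
    exact bv22
  rw [h1, h2, h3, one_mul, map_one]
  have h4 : 2 * p - (n + 1) - 2 = 2 * p - n - 3 := by omega
  rw [h4]

/-- For `p ≥ 2`,
`(I_{A_p} ⊠ h)(α ⊗ x) = Σ_{i=0}^{p−2} β_{2p−i−2} ⊗ y⁴`
(recall `β_{2p−i−2}` is encoded as `some ⟨2p−i−3, _⟩` and `y⁴` as `7 : Fin 8`). -/
theorem statement10 (p : ℕ) (hp : 2 ≤ p) :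
    boxAp p deltaB deltaC hMat () =
      ∑ i ∈ Finset.range (p - 1),
        Pi.single ((some ⟨2 * p - i - 3, by omega⟩ : Option (Fin (2 * p - 2))),
          (7 : Fin 8)) 1 := by
  funext gu
  obtain ⟨g, u⟩ := gu
  rw [Finset.sum_apply]
  show (∑ᶠ P : List Unit × List (Fin 8), ∑ t : Fin 8,
      if lastNode t P.2 = u then
        mcoefAp p (chain deltaB () P.1 ++ hMat (lastNode () P.1) t :: chain deltaC t P.2) g
      else 0) =
    ∑ i ∈ Finset.range (p - 1),
      (Pi.single ((some ⟨2 * p - i - 3, by omega⟩ : Option (Fin (2 * p - 2))),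
        (7 : Fin 8)) 1 : Option (Fin (2 * p - 2)) × Fin 8 → Polynomial F2) (g, u)
  set T : Finset (List Unit × List (Fin 8)) :=
    (Finset.range (p - 1)).image (fun j => (List.replicate j (), ([] : List (Fin 8)))) with hT
  have hterm0 : ∀ (l1 : List Unit) (l2 : List (Fin 8)) (t : Fin 8), t ≠ 7 →
      mcoefAp p (chain deltaB () l1 ++ hMat (lastNode () l1) t :: chain deltaC t l2) g = 0 := by
    intro l1 l2 t ht
    apply mcoefAp_zero
    have he : hMat (lastNode () l1) t = 0 := hMat0 t ht
    rw [← he]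
    exact List.mem_append_right _ List.mem_cons_self
  have hterm7 : ∀ (l1 : List Unit) (v : Fin 8) (l2 : List (Fin 8)),
      mcoefAp p (chain deltaB () l1 ++ hMat (lastNode () l1) 7 ::
        chain deltaC 7 (v :: l2)) g = 0 := by
    intro l1 v l2
    apply mcoefAp_zero
    have hm : deltaC 7 v ∈ chain deltaB () l1 ++ hMat (lastNode () l1) 7 ::
        chain deltaC 7 (v :: l2) := by
      rw [show chain deltaC 7 (v :: l2) = deltaC 7 v :: chain deltaC v l2 from rfl]
      exact List.mem_append_right _ (List.mem_cons_of_mem _ List.mem_cons_self)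
    rw [hdC7 v] at hm
    exact hm
  have hsub : Function.support (fun P : List Unit × List (Fin 8) => ∑ t : Fin 8,
      if lastNode t P.2 = u then
        mcoefAp p (chain deltaB () P.1 ++ hMat (lastNode () P.1) t :: chain deltaC t P.2) g
      else 0) ⊆ ↑T := by
    intro P hP
    rw [Function.mem_support] at hP
    rw [Finset.mem_coe]
    by_contra hPT
    apply hP
    obtain ⟨l1, l2⟩ := P
    cases l2 with
    | cons v l2' =>
      apply Finset.sum_eq_zero
      intro t _
      have hz : mcoefAp p (chain deltaB () l1 ++ hMat (lastNode () l1) t ::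
          chain deltaC t (v :: l2')) g = 0 := by
        by_cases ht : t = 7
        · subst ht; exact hterm7 l1 v l2'
        · exact hterm0 l1 (v :: l2') t ht
      rw [hz, ite_self]
    | nil =>
      have hl1 : l1 = List.replicate l1.length () :=
        List.eq_replicate_length.mpr fun b _ => rfl
      have hlen : p - 1 ≤ l1.length := by
        by_contra hc
        push_neg at hc
        exact hPT (Finset.mem_image.mpr ⟨l1.length, Finset.mem_range.mpr hc,
          by rw [← hl1]⟩)
      apply Finset.sum_eq_zero
      intro t _
      have hz : mcoefAp p (chain deltaB () l1 ++ hMat (lastNode () l1) t ::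
          chain deltaC t []) g = 0 := by
        by_cases ht : t = 7
        · subst ht
          have hlist : chain deltaB () l1 ++ hMat (lastNode () l1) 7 ::
              chain deltaC 7 ([] : List (Fin 8)) =
              List.replicate l1.length (bv 5) ++ [bv 2] := by
            rw [chainB]
            rw [show hMat (lastNode () l1) = hMat () from rfl, hMat7]
            rfl
          rw [hlist]
          cases g with
          | none => exact key_none p l1.length
          | some i =>
            rw [key_some]
            rw [if_neg]
            rintro ⟨h1, -⟩
            omega
        · exact hterm0 l1 [] t ht
      rw [hz, ite_self]
  rw [finsum_eq_finset_sum_of_support_subset _ hsub]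
  rw [hT, Finset.sum_image (by
    intro a _ b _ hab
    simpa using congrArg (fun q : List Unit × List (Fin 8) => q.1.length) hab)]
  apply Finset.sum_congr rfl
  intro j hj
  have hj' : j + 1 ≤ p - 1 := by
    have := Finset.mem_range.mp hj
    omega
  simp only [show ∀ t : Fin 8, lastNode t ([] : List (Fin 8)) = t from fun _ => rfl]
  rw [Finset.sum_ite_eq' Finset.univ u
    (fun t => mcoefAp p (chain deltaB () (List.replicate j ()) ++
      hMat (lastNode () (List.replicate j ())) t ::
      chain deltaC t []) g), if_pos (Finset.mem_univ u)]
  have hlist : chain deltaB () (List.replicate j ()) ++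
      hMat (lastNode () (List.replicate j ())) u :: chain deltaC u ([] : List (Fin 8)) =
      List.replicate j (bv 5) ++ [hMat () u] := by
    rw [chainB, List.length_replicate]
    rfl
  rw [hlist]
  by_cases hu : u = 7
  · subst hu
    rw [hMat7]
    cases g with
    | none =>
      rw [key_none]
      simp [Pi.single_apply]
    | some i =>
      rw [key_some]
      simp [Pi.single_apply, Fin.ext_iff, hj']
  · have hz : mcoefAp p (List.replicate j (bv 5) ++ [hMat () u]) g = 0 := by
      apply mcoefAp_zero
      rw [← hMat0 u hu]
      exact List.mem_append_right _ (List.mem_singleton_self _)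
    rw [hz]
    simp [Pi.single_apply, Prod.ext_iff, hu]
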